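/- arXiv:math/0605785 — 2 statements merged into one kernel-verified Lean document; each statement's English description precedes it below -/
import Mathlib

section
/- For elements a, b, w of a finite Coxeter group W: a ≤ a w and a w ≤ b (in absolute order) holds if and only if a ≤ b w^{-1} and b w^{-1} ≤ b. -/
open CoxeterSystem

/-- The reflection length `l_T` of an element of a Coxeter group: the least `k` such that
`w` is a product of `k` reflections. -/
noncomputable def reflLen {B W : Type*} [Group W] {M : CoxeterMatrix B}
    (cs : CoxeterSystem M W) (w : W) : ℕ :=
  sInf {k | ∃ l : List W, l.length = k ∧ (∀ t ∈ l, cs.IsReflection t) ∧ l.prod = w}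

/-- The absolute order on a Coxeter group: `u ≤ v` iff `l_T(u) + l_T(u⁻¹v) = l_T(v)`. -/
def absLe {B W : Type*} [Group W] {M : CoxeterMatrix B}
    (cs : CoxeterSystem M W) (u v : W) : Prop :=
  reflLen cs u + reflLen cs (u⁻¹ * v) = reflLen cs v

section aux

variable {B W : Type*} [Group W] {M : CoxeterMatrix B} (cs : CoxeterSystem M W)

lemma reflLen_set_nonempty (w : W) :
    {k | ∃ l : List W, l.length = k ∧ (∀ t ∈ l, cs.IsReflection t) ∧ l.prod = w}.Nonempty := by
  obtain ⟨ω, rfl⟩ := cs.wordProd_surjective w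
  exact ⟨(ω.map cs.simple).length, ω.map cs.simple, rfl, by
    intro t ht
    obtain ⟨i, _, rfl⟩ := List.mem_map.mp ht
    exact cs.isReflection_simple i, rfl⟩

lemma reflLen_spec (w : W) :
    ∃ l : List W, l.length = reflLen cs w ∧ (∀ t ∈ l, cs.IsReflection t) ∧ l.prod = w :=
  Nat.sInf_mem (reflLen_set_nonempty cs w)

lemma reflLen_le (w : W) (l : List W) (hl : ∀ t ∈ l, cs.IsReflection t) (hp : l.prod = w) :
    reflLen cs w ≤ l.length :=
  Nat.sInf_le ⟨l, rfl, hl, hp⟩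

lemma reflLen_mul_le (u v : W) : reflLen cs (u * v) ≤ reflLen cs u + reflLen cs v := by
  obtain ⟨l, hl, hlr, hlp⟩ := reflLen_spec cs u
  obtain ⟨m, hm, hmr, hmp⟩ := reflLen_spec cs v
  have := reflLen_le cs (u * v) (l ++ m) (by
    intro t ht
    rcases List.mem_append.mp ht with h | h
    exacts [hlr t h, hmr t h]) (by rw [List.prod_append, hlp, hmp])
  simpa [hl, hm] using this

lemma reflLen_conj_le (w x : W) : reflLen cs (x * w * x⁻¹) ≤ reflLen cs w := by
  obtain ⟨l, hl, hlr, hlp⟩ := reflLen_spec cs w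
  have := reflLen_le cs (x * w * x⁻¹) (l.map (fun t => x * t * x⁻¹)) (by
    intro t ht
    obtain ⟨s, hs, rfl⟩ := List.mem_map.mp ht
    exact (hlr s hs).conj x) (by
      have key : ∀ m : List W, (m.map (fun t => x * t * x⁻¹)).prod = x * m.prod * x⁻¹ := by
        intro m
        induction m with
        | nil => simp
        | cons a m ih => simp only [List.map_cons, List.prod_cons, ih]; group
      rw [key, hlp])
  simpa [hl] using this

lemma reflLen_conj (w x : W) : reflLen cs (x * w * x⁻¹) = reflLen cs w := by
  refine le_antisymm (reflLen_conj_le cs w x) ?_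
  have := reflLen_conj_le cs (x * w * x⁻¹) x⁻¹
  simpa [mul_assoc] using this

end aux

/-- `a ≤ aw ≤ b` if and only if `a ≤ bw⁻¹ ≤ b` in absolute order. -/
theorem absLe_mul_iff_right {B W : Type*} [Group W] [Finite W] {M : CoxeterMatrix B}
    (cs : CoxeterSystem M W) (a b w : W) :
    (absLe cs a (a * w) ∧ absLe cs (a * w) b) ↔
      (absLe cs a (b * w⁻¹) ∧ absLe cs (b * w⁻¹) b) := by
  unfold absLe
  have h1 : a⁻¹ * (a * w) = w := by group
  have h2 : (a * w)⁻¹ * b = w⁻¹ * a⁻¹ * b := by group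
  have h3 : a⁻¹ * (b * w⁻¹) = a⁻¹ * b * w⁻¹ := by group
  have h4 : (b * w⁻¹)⁻¹ * b = w := by group
  rw [h1, h2, h3, h4]
  have hconj : reflLen cs (a⁻¹ * b * w⁻¹) = reflLen cs (w⁻¹ * a⁻¹ * b) := by
    have := reflLen_conj cs (w⁻¹ * a⁻¹ * b) w
    rw [← this]; congr 1; group
  rw [hconj]
  constructor
  · rintro ⟨e1, e2⟩
    -- e1 : ℓ a + ℓ w = ℓ (a*w); e2 : ℓ(a*w) + ℓ(w⁻¹a⁻¹b) = ℓ b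
    have hle1 : reflLen cs (b * w⁻¹) ≤ reflLen cs a + reflLen cs (w⁻¹ * a⁻¹ * b) := by
      have h : a * (a⁻¹ * b * w⁻¹) = b * w⁻¹ := by group
      calc reflLen cs (b * w⁻¹) = reflLen cs (a * (a⁻¹ * b * w⁻¹)) := by rw [h]
        _ ≤ reflLen cs a + reflLen cs (a⁻¹ * b * w⁻¹) := reflLen_mul_le cs _ _
        _ = _ := by rw [hconj]
    have hle2 : reflLen cs b ≤ reflLen cs (b * w⁻¹) + reflLen cs w := by
      have h : b * w⁻¹ * w = b := by group
      calc reflLen cs b = reflLen cs (b * w⁻¹ * w) := by rw [h]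
        _ ≤ _ := reflLen_mul_le cs _ _
    omega
  · rintro ⟨e1, e2⟩
    -- e1 : ℓ a + ℓ(w⁻¹a⁻¹b) = ℓ(bw⁻¹); e2 : ℓ(bw⁻¹) + ℓ w = ℓ b
    have hle1 : reflLen cs (a * w) ≤ reflLen cs a + reflLen cs w := reflLen_mul_le cs _ _
    have hle2 : reflLen cs b ≤ reflLen cs (a * w) + reflLen cs (w⁻¹ * a⁻¹ * b) := by
      have h : a * w * (w⁻¹ * a⁻¹ * b) = b := by group
      calc reflLen cs b = reflLen cs (a * w * (w⁻¹ * a⁻¹ * b)) := by rw [h]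
        _ ≤ _ := reflLen_mul_le cs _ _
    omega
end

section
/- Let (w_1, ..., w_m) ∈ NC_(m)(γ). The map sending (a_1, ..., a_m) to (a'_1, ..., a'_m) with a'_i = w_1 ... w_{i-1} a_i w_{i-1}^{-1} ... w_1^{-1} is a rank-preserving bijection from the set A = {(a_1,...,a_m) : (a_1,...,a_m) ≤ (a_1 w_1, ..., a_m w_m) in NC_(m)(γ)} onto NC_(m)(γ w_m^{-1} ... w_1^{-1}). -/
open CoxeterSystem

/-- `NC_(m)(δ)`: the set of `m`-tuples `(w_1, …, w_m)` with `w_1 ⋯ w_m ≤ δ` in absolute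
order and `l_T(w_1 ⋯ w_m) = Σ l_T(w_i)`. -/
def NCm {B W : Type*} [Group W] {M : CoxeterMatrix B}
    (cs : CoxeterSystem M W) (δ : W) {m : ℕ} (w : Fin m → W) : Prop :=
  absLe cs ((List.ofFn w).prod) δ ∧
    reflLen cs ((List.ofFn w).prod) = ∑ i, reflLen cs (w i)

namespace NCaux

variable {B W : Type*} [Group W] {M : CoxeterMatrix B} (cs : CoxeterSystem M W)

lemma prod_map_conj (g : W) (l : List W) :
    (l.map (fun t => g * t * g⁻¹)).prod = g * l.prod * g⁻¹ := by
  induction l with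
  | nil => simp
  | cons x xs ih =>
    simp only [List.map_cons, List.prod_cons, ih]
    group

lemma reflLen_le {u : W} {l : List W} (h1 : ∀ t ∈ l, cs.IsReflection t) (h2 : l.prod = u) :
    reflLen cs u ≤ l.length :=
  Nat.sInf_le ⟨l, rfl, h1, h2⟩

lemma reflLen_spec (u : W) : ∃ l : List W,
    l.length = reflLen cs u ∧ (∀ t ∈ l, cs.IsReflection t) ∧ l.prod = u := by
  have hne : {k | ∃ l : List W, l.length = k ∧ (∀ t ∈ l, cs.IsReflection t) ∧ l.prod = u}.Nonempty := by
    obtain ⟨ω, rfl⟩ := cs.wordProd_surjective u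
    exact ⟨(ω.map cs.simple).length, ω.map cs.simple, rfl, by
      intro t ht
      obtain ⟨i, _, rfl⟩ := List.mem_map.mp ht
      exact cs.isReflection_simple i, rfl⟩
  exact Nat.sInf_mem hne

lemma reflLen_one : reflLen cs (1 : W) = 0 :=
  Nat.le_zero.mp (reflLen_le cs (l := []) (by simp) (by simp))

lemma reflLen_mul_le (u v : W) : reflLen cs (u * v) ≤ reflLen cs u + reflLen cs v := by
  obtain ⟨lu, hlu, hru, hpu⟩ := reflLen_spec cs u
  obtain ⟨lv, hlv, hrv, hpv⟩ := reflLen_spec cs v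
  have := reflLen_le cs (l := lu ++ lv) (by
    intro t ht
    rcases List.mem_append.mp ht with h | h
    exacts [hru t h, hrv t h]) (by rw [List.prod_append, hpu, hpv])
  simpa [hlu, hlv] using this

lemma reflLen_inv_le (u : W) : reflLen cs u⁻¹ ≤ reflLen cs u := by
  obtain ⟨l, hl, hr, hp⟩ := reflLen_spec cs u
  have := reflLen_le cs (l := (l.map Inv.inv).reverse) (by
    intro t ht
    rw [List.mem_reverse, List.mem_map] at ht
    obtain ⟨s, hs, rfl⟩ := ht
    exact (hr s hs).isReflection_inv) (by rw [← List.prod_inv_reverse, hp])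
  simpa [hl] using this

lemma reflLen_inv (u : W) : reflLen cs u⁻¹ = reflLen cs u :=
  le_antisymm (reflLen_inv_le cs u) (by simpa using reflLen_inv_le cs u⁻¹)

lemma reflLen_conj_le (g u : W) : reflLen cs (g * u * g⁻¹) ≤ reflLen cs u := by
  obtain ⟨l, hl, hr, hp⟩ := reflLen_spec cs u
  have := reflLen_le cs (l := l.map (fun t => g * t * g⁻¹)) (by
    intro t ht
    obtain ⟨s, hs, rfl⟩ := List.mem_map.mp ht
    exact (hr s hs).conj g) (by rw [NCaux.prod_map_conj, hp])
  simpa [hl] using this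

lemma reflLen_conj (g u : W) : reflLen cs (g * u * g⁻¹) = reflLen cs u := by
  refine le_antisymm (reflLen_conj_le cs g u) ?_
  have := reflLen_conj_le cs g⁻¹ (g * u * g⁻¹)
  calc reflLen cs u = reflLen cs (g⁻¹ * (g * u * g⁻¹) * g⁻¹⁻¹) := by group
    _ ≤ reflLen cs (g * u * g⁻¹) := this

lemma reflLen_list_prod_le (l : List W) : reflLen cs l.prod ≤ (l.map (reflLen cs)).sum := by
  induction l with
  | nil => simp [reflLen_one]
  | cons x xs ih =>
    simp only [List.prod_cons, List.map_cons, List.sum_cons]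
    exact (reflLen_mul_le cs x xs.prod).trans (by omega)

lemma reflLen_ofFn_le {m : ℕ} (f : Fin m → W) :
    reflLen cs (List.ofFn f).prod ≤ ∑ i, reflLen cs (f i) := by
  have := reflLen_list_prod_le cs (List.ofFn f)
  rwa [List.map_ofFn, List.sum_ofFn] at this

lemma absLe_trans {u v z : W} (h1 : absLe cs u v) (h2 : absLe cs v z) : absLe cs u z := by
  unfold absLe at *
  have h3 : reflLen cs (u⁻¹ * z) ≤ reflLen cs (u⁻¹ * v) + reflLen cs (v⁻¹ * z) := by
    have := reflLen_mul_le cs (u⁻¹ * v) (v⁻¹ * z)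
    simpa [mul_assoc] using this
  have h4 : reflLen cs z ≤ reflLen cs u + reflLen cs (u⁻¹ * z) := by
    have := reflLen_mul_le cs u (u⁻¹ * z)
    simpa using this
  omega

lemma chain_step {x0 X y0 Y : W} (hx : absLe cs x0 y0) (hX : absLe cs X Y)
    (hadd : reflLen cs (y0 * Y) = reflLen cs y0 + reflLen cs Y) :
    reflLen cs (x0 * X) = reflLen cs x0 + reflLen cs X ∧ absLe cs (x0 * X) (y0 * Y) := by
  unfold absLe at *
  set u := x0⁻¹ * y0 with hu
  set v := X⁻¹ * Y with hv
  set z := (X⁻¹ * u * X) * v with hz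
  have hid : y0 * Y = (x0 * X) * z := by rw [hz, hu, hv]; group
  have lz : reflLen cs z ≤ reflLen cs u + reflLen cs v := by
    rw [hz]
    have h1 := reflLen_mul_le cs (X⁻¹ * u * X) v
    have h2 : reflLen cs (X⁻¹ * u * X) = reflLen cs u := by
      have := reflLen_conj cs X⁻¹ u
      simpa using this
    omega
  have l1 : reflLen cs (y0 * Y) ≤ reflLen cs (x0 * X) + reflLen cs z := by
    rw [hid]; exact reflLen_mul_le cs _ _
  have l2 : reflLen cs (x0 * X) ≤ reflLen cs x0 + reflLen cs X :=
    reflLen_mul_le cs _ _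
  have hz' : (x0 * X)⁻¹ * (y0 * Y) = z := by rw [hid]; group
  rw [hz']
  omega

lemma chain {m : ℕ} (x y : Fin m → W) (hxy : ∀ i, absLe cs (x i) (y i))
    (hy : reflLen cs (List.ofFn y).prod = ∑ i, reflLen cs (y i)) :
    reflLen cs (List.ofFn x).prod = ∑ i, reflLen cs (x i) ∧
      absLe cs ((List.ofFn x).prod) ((List.ofFn y).prod) := by
  induction m with
  | zero =>
    refine ⟨by simp [reflLen_one], ?_⟩
    unfold absLe
    simp [reflLen_one]
  | succ n ih =>
    simp only [List.ofFn_succ, List.prod_cons, Fin.sum_univ_succ] at hy ⊢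
    have hYle : reflLen cs (List.ofFn fun i : Fin n => y i.succ).prod
        ≤ ∑ i : Fin n, reflLen cs (y i.succ) := reflLen_ofFn_le cs _
    have hmul := reflLen_mul_le cs (y 0) (List.ofFn fun i : Fin n => y i.succ).prod
    have hYeq : reflLen cs (List.ofFn fun i : Fin n => y i.succ).prod
        = ∑ i : Fin n, reflLen cs (y i.succ) := by omega
    have hadd : reflLen cs (y 0 * (List.ofFn fun i : Fin n => y i.succ).prod)
        = reflLen cs (y 0) + reflLen cs (List.ofFn fun i : Fin n => y i.succ).prod := by omega
    obtain ⟨ihs, ihle⟩ := ih (fun i => x i.succ) (fun i => y i.succ) (fun i => hxy i.succ) hYeq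
    obtain ⟨h1, h2⟩ := chain_step cs (hxy 0) ihle hadd
    exact ⟨by omega, h2⟩

lemma conj_prod {m : ℕ} (a w : Fin m → W) :
    (List.ofFn (fun i : Fin m =>
        (((List.ofFn w).take i.val).prod) * a i * ((((List.ofFn w).take i.val).prod))⁻¹)).prod
      = (List.ofFn (fun i : Fin m => a i * w i)).prod * ((List.ofFn w).prod)⁻¹ := by
  induction m with
  | zero => simp
  | succ n ih =>
    have ihs := ih (fun i => a i.succ) (fun i => w i.succ)
    rw [List.ofFn_succ (f := fun i : Fin (n+1) =>
        (((List.ofFn w).take i.val).prod) * a i * ((((List.ofFn w).take i.val).prod))⁻¹),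
      List.ofFn_succ (f := fun i : Fin (n+1) => a i * w i)]
    simp only [List.prod_cons]
    have hW : (List.ofFn w).prod = w 0 * (List.ofFn fun i : Fin n => w i.succ).prod := by
      rw [List.ofFn_succ (f := w), List.prod_cons]
    have htake : ∀ i : Fin n, (List.ofFn w).take (i.succ).val
        = w 0 :: (List.ofFn fun j : Fin n => w j.succ).take i.val := by
      intro i
      conv_lhs => rw [List.ofFn_succ (f := w)]
      rw [Fin.val_succ, List.take_succ_cons]
    have hfun : (fun i : Fin n =>
        (((List.ofFn w).take (Fin.succ i).val).prod) * a (Fin.succ i)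
          * ((((List.ofFn w).take (Fin.succ i).val).prod))⁻¹)
        = fun i : Fin n => w 0 *
          ((((List.ofFn fun j : Fin n => w j.succ).take i.val).prod) * a i.succ
            * ((((List.ofFn fun j : Fin n => w j.succ).take i.val).prod))⁻¹) * (w 0)⁻¹ := by
      funext i
      rw [htake i, List.prod_cons]
      group
    rw [hfun]
    have hconj : (List.ofFn fun i : Fin n => w 0 *
          ((((List.ofFn fun j : Fin n => w j.succ).take i.val).prod) * a i.succ
            * ((((List.ofFn fun j : Fin n => w j.succ).take i.val).prod))⁻¹) * (w 0)⁻¹).prod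
        = w 0 * (List.ofFn fun i : Fin n =>
          (((List.ofFn fun j : Fin n => w j.succ).take i.val).prod) * a i.succ
            * ((((List.ofFn fun j : Fin n => w j.succ).take i.val).prod))⁻¹).prod * (w 0)⁻¹ := by
      rw [← prod_map_conj (w 0), List.map_ofFn]
      rfl
    rw [hconj, ihs, hW]
    simp only [Fin.val_zero, List.take_zero, List.prod_nil]
    group

lemma key_iff (γ : W) {m : ℕ} (w : Fin m → W) (hw : NCm cs γ w) (a : Fin m → W) :
    (NCm cs γ a ∧ NCm cs γ (fun i => a i * w i) ∧ ∀ i, absLe cs (a i) (a i * w i)) ↔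
    NCm cs (γ * ((List.ofFn w).prod)⁻¹)
      (fun i => (((List.ofFn w).take i.val).prod) * a i * ((((List.ofFn w).take i.val).prod))⁻¹) := by
  obtain ⟨hw1, hw2⟩ := hw
  unfold absLe at hw1
  simp only [NCm, absLe, inv_mul_cancel_left]
  have hπ := conj_prod a w
  have hsum_φ : (∑ i, reflLen cs ((((List.ofFn w).take i.val).prod) * a i
        * ((((List.ofFn w).take i.val).prod))⁻¹)) = ∑ i, reflLen cs (a i) :=
    Finset.sum_congr rfl fun i _ => reflLen_conj cs _ _
  have hπle := reflLen_ofFn_le cs (fun i : Fin m =>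
    (((List.ofFn w).take i.val).prod) * a i * ((((List.ofFn w).take i.val).prod))⁻¹)
  have hBle := reflLen_ofFn_le cs (fun i : Fin m => a i * w i)
  have hterm : ∀ i, reflLen cs (a i * w i) ≤ reflLen cs (a i) + reflLen cs (w i) :=
    fun i => reflLen_mul_le cs _ _
  have e1 : (List.ofFn w).prod⁻¹ * γ
      = (List.ofFn w).prod⁻¹ * (γ * (List.ofFn w).prod⁻¹) * ((List.ofFn w).prod⁻¹)⁻¹ := by group
  have hγconjW : reflLen cs ((List.ofFn w).prod⁻¹ * γ)
      = reflLen cs (γ * (List.ofFn w).prod⁻¹) := by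
    rw [e1]; exact reflLen_conj cs _ _
  have hsums : ∑ i, (reflLen cs (a i) + reflLen cs (w i))
      = ∑ i, reflLen cs (a i) + ∑ i, reflLen cs (w i) := Finset.sum_add_distrib
  set Wp := (List.ofFn w).prod with hWp
  set A := (List.ofFn a).prod with hAdef
  set Bv := (List.ofFn fun i : Fin m => a i * w i).prod with hBvdef
  set π := (List.ofFn fun i : Fin m =>
    (((List.ofFn w).take i.val).prod) * a i * ((((List.ofFn w).take i.val).prod))⁻¹).prod with hπdef
  have hexp1 : π⁻¹ * (γ * Wp⁻¹) = Wp * (Bv⁻¹ * γ) * Wp⁻¹ := by rw [hπ]; group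
  have hconjB : reflLen cs (π⁻¹ * (γ * Wp⁻¹)) = reflLen cs (Bv⁻¹ * γ) := by
    rw [hexp1]; exact reflLen_conj cs _ _
  have hBπ : reflLen cs Bv ≤ reflLen cs π + reflLen cs Wp := by
    have h := reflLen_mul_le cs π Wp
    have h2 : π * Wp = Bv := by rw [hπ]; group
    rwa [h2] at h
  have hγsub : reflLen cs γ ≤ reflLen cs Bv + reflLen cs (Bv⁻¹ * γ) := by
    have h := reflLen_mul_le cs Bv (Bv⁻¹ * γ)
    rwa [mul_inv_cancel_left] at h
  constructor
  · rintro ⟨⟨hA1, hA2⟩, ⟨hB1, hB2⟩, hC⟩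
    have hCsum : ∑ i, reflLen cs (a i * w i)
        = ∑ i, reflLen cs (a i) + ∑ i, reflLen cs (w i) := by
      rw [← hsums]; exact Finset.sum_congr rfl fun i _ => (hC i).symm
    constructor
    · omega
    · omega
  · rintro ⟨h1, h2⟩
    have hBv1 : reflLen cs Bv + reflLen cs (Bv⁻¹ * γ) = reflLen cs γ
        ∧ reflLen cs Bv = reflLen cs π + reflLen cs Wp := by omega
    have hle2 : ∑ i, reflLen cs (a i * w i)
        ≤ ∑ i, (reflLen cs (a i) + reflLen cs (w i)) :=
      Finset.sum_le_sum fun i _ => hterm i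
    have hsum_e : ∑ i, reflLen cs (a i * w i)
        = ∑ i, (reflLen cs (a i) + reflLen cs (w i)) := by omega
    have hCpt : ∀ i, reflLen cs (a i * w i) = reflLen cs (a i) + reflLen cs (w i) := by
      intro i
      exact (Finset.sum_eq_sum_iff_of_le (fun i _ => hterm i)).mp hsum_e i (Finset.mem_univ i)
    have hB2' : reflLen cs Bv = ∑ i, reflLen cs (a i * w i) := by omega
    have hch := chain cs a (fun i => a i * w i)
      (fun i => by
        show absLe cs (a i) (a i * w i)
        unfold absLe
        rw [inv_mul_cancel_left]
        exact (hCpt i).symm) hB2'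
    have hA1' : absLe cs A γ := by
      refine absLe_trans cs hch.2 ?_
      unfold absLe
      exact hBv1.1
    refine ⟨⟨hA1', hch.1⟩, ⟨hBv1.1, hB2'⟩, fun i => (hCpt i).symm⟩

end NCaux

/-- For `(w_1, …, w_m) ∈ NC_(m)(γ)`, the map sending `(a_1, …, a_m)` to `(a'_1, …, a'_m)`
with `a'_i = w_1 ⋯ w_{i-1} a_i w_{i-1}⁻¹ ⋯ w_1⁻¹` is a rank-preserving bijection from
`A = {(a_1,…,a_m) : (a_1,…,a_m) ≤ (a_1w_1, …, a_mw_m) in NC_(m)(γ)}` onto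
`NC_(m)(γ w_m⁻¹ ⋯ w_1⁻¹)`. -/
theorem NCm_rank_preserving_bijection {B W : Type*} [Group W] [Finite W] {M : CoxeterMatrix B}
    (cs : CoxeterSystem M W) (γ : W) {m : ℕ} (w : Fin m → W) (hw : NCm cs γ w) :
    ∃ e : {a : Fin m → W // NCm cs γ a ∧ NCm cs γ (fun i => a i * w i) ∧
            ∀ i, absLe cs (a i) (a i * w i)} ≃
          {a' : Fin m → W // NCm cs (γ * ((List.ofFn w).prod)⁻¹) a'},
      (∀ x (i : Fin m), (e x).1 i =
          ((List.ofFn w).take i.val).prod * x.1 i * (((List.ofFn w).take i.val).prod)⁻¹) ∧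
      ∀ x, ∑ i, reflLen cs ((e x).1 i) = ∑ i, reflLen cs (x.1 i) := by
  refine ⟨Equiv.subtypeEquiv
    (⟨fun a i => ((List.ofFn w).take i.val).prod * a i * (((List.ofFn w).take i.val).prod)⁻¹,
      fun a i => (((List.ofFn w).take i.val).prod)⁻¹ * a i * ((List.ofFn w).take i.val).prod,
      by intro a; funext i; group,
      by intro a; funext i; group⟩)
    (fun a => NCaux.key_iff cs γ w hw a), fun x i => rfl,
    fun x => Finset.sum_congr rfl fun i _ => NCaux.reflLen_conj cs _ _⟩
end
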